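/- Let A be an n×n complex matrix partitioned into 2×2 blocks with A_{11} a square invertible diagonal block, and suppose Re A is positive definite. Then Re(A/A_{11}) ≥ (Re A)/(Re A_{11}), where A/A_{11} = A_{22} − A_{21} A_{11}^{-1} A_{12} denotes the Schur complement. -/

import Mathlib

open Matrix ComplexOrder

/-- The Hermitian real part `(A + Aᴴ)/2` of a complex matrix. -/
noncomputable def matRe {p q : ℕ} (A : Matrix (Fin p ⊕ Fin q) (Fin p ⊕ Fin q) ℂ) :
    Matrix (Fin p ⊕ Fin q) (Fin p ⊕ Fin q) ℂ :=
  (1 / 2 : ℂ) • (A + Aᴴ)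

/-- The Schur complement `A/A₁₁ = A₂₂ - A₂₁ A₁₁⁻¹ A₁₂` of the (1,1) block. -/
noncomputable def schur {p q : ℕ} (A : Matrix (Fin p ⊕ Fin q) (Fin p ⊕ Fin q) ℂ) :
    Matrix (Fin q) (Fin q) ℂ :=
  A.toBlocks₂₂ - A.toBlocks₂₁ * (A.toBlocks₁₁)⁻¹ * A.toBlocks₁₂

lemma matRe_isHermitian {p q : ℕ} (A : Matrix (Fin p ⊕ Fin q) (Fin p ⊕ Fin q) ℂ) :
    (matRe A).IsHermitian := by
  unfold matRe
  rw [Matrix.IsHermitian, conjTranspose_smul, conjTranspose_add, conjTranspose_conjTranspose]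
  have : star (1 / 2 : ℂ) = (1 / 2 : ℂ) := by norm_num [Complex.ext_iff]
  rw [this, add_comm]

lemma toBlocks11_herm {p q : ℕ} {M : Matrix (Fin p ⊕ Fin q) (Fin p ⊕ Fin q) ℂ}
    (hM : M.IsHermitian) : M.toBlocks₁₁.IsHermitian := by
  ext i j
  simpa [Matrix.toBlocks₁₁, conjTranspose_apply] using congrFun (congrFun hM (Sum.inl i)) (Sum.inl j)

lemma toBlocks22_herm {p q : ℕ} {M : Matrix (Fin p ⊕ Fin q) (Fin p ⊕ Fin q) ℂ}
    (hM : M.IsHermitian) : M.toBlocks₂₂.IsHermitian := by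
  ext i j
  simpa [Matrix.toBlocks₂₂, conjTranspose_apply] using congrFun (congrFun hM (Sum.inr i)) (Sum.inr j)

lemma toBlocks21_eq {p q : ℕ} {M : Matrix (Fin p ⊕ Fin q) (Fin p ⊕ Fin q) ℂ}
    (hM : M.IsHermitian) : M.toBlocks₂₁ = (M.toBlocks₁₂)ᴴ := by
  ext i j
  simpa [Matrix.toBlocks₂₁, Matrix.toBlocks₁₂, conjTranspose_apply] using
    (congrFun (congrFun hM (Sum.inr i)) (Sum.inl j)).symm

lemma quad_toBlocks11 {p q : ℕ} (M : Matrix (Fin p ⊕ Fin q) (Fin p ⊕ Fin q) ℂ) (x : Fin p → ℂ) :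
    star x ⬝ᵥ (M.toBlocks₁₁ *ᵥ x) = star (Sum.elim x 0) ⬝ᵥ (M *ᵥ Sum.elim x 0) := by
  conv_rhs => rw [← fromBlocks_toBlocks M]
  simp [fromBlocks_mulVec, Function.star_sumElim, sumElim_dotProduct_sumElim]

lemma posDef_toBlocks11 {p q : ℕ} {M : Matrix (Fin p ⊕ Fin q) (Fin p ⊕ Fin q) ℂ}
    (hM : M.PosDef) : M.toBlocks₁₁.PosDef := by
  refine PosDef.of_dotProduct_mulVec_pos (toBlocks11_herm hM.1) fun x hx => ?_
  rw [quad_toBlocks11]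
  refine hM.dotProduct_mulVec_pos fun h => hx ?_
  ext i
  exact congrFun h (Sum.inl i)

/-- conj of quadratic form is the quadratic form of the conjugate transpose. -/
lemma star_quad {m : Type*} [Fintype m] (M : Matrix m m ℂ) (y : m → ℂ) :
    star (star y ⬝ᵥ (M *ᵥ y)) = star y ⬝ᵥ (Mᴴ *ᵥ y) := by
  rw [star_dotProduct, star_star, star_mulVec, dotProduct_mulVec, dotProduct_comm]

/-- The key algebraic identity: the quadratic form of the Schur complement is the
quadratic form of the block matrix at a suitably extended vector. -/
lemma quad_schur {p q : ℕ} (A₁₁ : Matrix (Fin p) (Fin p) ℂ) (A₁₂ : Matrix (Fin p) (Fin q) ℂ)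
    (A₂₁ : Matrix (Fin q) (Fin p) ℂ) (A₂₂ : Matrix (Fin q) (Fin q) ℂ)
    (hA11 : IsUnit A₁₁) (y : Fin q → ℂ) :
    star (Sum.elim (-((A₁₁⁻¹ * A₁₂) *ᵥ y)) y) ⬝ᵥ
        (fromBlocks A₁₁ A₁₂ A₂₁ A₂₂ *ᵥ Sum.elim (-((A₁₁⁻¹ * A₁₂) *ᵥ y)) y) =
      star y ⬝ᵥ ((A₂₂ - A₂₁ * A₁₁⁻¹ * A₁₂) *ᵥ y) := by
  have hdet : IsUnit A₁₁.det := (Matrix.isUnit_iff_isUnit_det _).1 hA11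
  rw [fromBlocks_mulVec]
  simp only [Function.star_sumElim, sumElim_dotProduct_sumElim, Sum.elim_comp_inl,
    Sum.elim_comp_inr, mulVec_neg, mulVec_mulVec]
  rw [Matrix.mul_nonsing_inv_cancel_left _ _ hdet]
  simp [sub_mulVec, mulVec_mulVec, add_mulVec, neg_mulVec, dotProduct_add, dotProduct_neg,
    dotProduct_sub, Matrix.mul_assoc, sub_eq_add_neg, add_comm]

theorem re_schur_ge_schur_re {p q : ℕ} (A : Matrix (Fin p ⊕ Fin q) (Fin p ⊕ Fin q) ℂ)
    (hA11 : IsUnit A.toBlocks₁₁) (hA : (matRe A).PosDef) :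
    (((1 / 2 : ℂ) • (schur A + (schur A)ᴴ)) - schur (matRe A)).PosSemidef := by
  set H := matRe A with hHdef
  have hH : H.IsHermitian := matRe_isHermitian A
  have hH11 : H.toBlocks₁₁.PosDef := posDef_toBlocks11 hA
  haveI : Invertible H.toBlocks₁₁ := hH11.isUnit.invertible
  have h21 : H.toBlocks₂₁ = (H.toBlocks₁₂)ᴴ := toBlocks21_eq hH
  have hschurH : schur H = H.toBlocks₂₂ - (H.toBlocks₁₂)ᴴ * (H.toBlocks₁₁)⁻¹ * H.toBlocks₁₂ := by
    rw [schur, h21]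
  refine PosSemidef.of_dotProduct_mulVec_nonneg ?_ ?_
  · -- Hermitian
    have h1 : ((1 / 2 : ℂ) • (schur A + (schur A)ᴴ)).IsHermitian := by
      rw [Matrix.IsHermitian, conjTranspose_smul, conjTranspose_add, conjTranspose_conjTranspose]
      have : star (1 / 2 : ℂ) = (1 / 2 : ℂ) := by norm_num [Complex.ext_iff]
      rw [this, add_comm]
    have h2 : (schur H).IsHermitian := by
      rw [hschurH]
      exact (toBlocks22_herm hH).sub
        (isHermitian_conjTranspose_mul_mul _ (toBlocks11_herm hH).inv)
    exact h1.sub h2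
  · intro y
    set x : Fin p → ℂ := -(((A.toBlocks₁₁)⁻¹ * A.toBlocks₁₂) *ᵥ y) with hxdef
    set v : Fin p ⊕ Fin q → ℂ := Sum.elim x y with hvdef
    -- quadratic form of the real part of schur A equals quadratic form of H at v
    have hq : star v ⬝ᵥ (A *ᵥ v) = star y ⬝ᵥ (schur A *ᵥ y) := by
      conv_lhs => rw [hvdef, hxdef, ← fromBlocks_toBlocks A]
      simp only [toBlocks_fromBlocks₁₁, toBlocks_fromBlocks₁₂]
      rw [quad_schur _ _ _ _ hA11 y, schur]
    have hre : star y ⬝ᵥ (((1 / 2 : ℂ) • (schur A + (schur A)ᴴ)) *ᵥ y)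
        = star v ⬝ᵥ (H *ᵥ v) := by
      rw [hHdef]
      unfold matRe
      rw [smul_mulVec, smul_mulVec, add_mulVec, add_mulVec, dotProduct_smul,
        dotProduct_smul, dotProduct_add, dotProduct_add, ← star_quad, ← star_quad, ← hq]
    -- decompose quadratic form of H at v via the Schur complement of H
    have hHblocks : H = fromBlocks H.toBlocks₁₁ H.toBlocks₁₂ (H.toBlocks₁₂)ᴴ H.toBlocks₂₂ := by
      rw [← h21, fromBlocks_toBlocks]
    have hsc := schur_complement_eq₁₁ (A := H.toBlocks₁₁) H.toBlocks₁₂ H.toBlocks₂₂ x y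
      (toBlocks11_herm hH)
    rw [← hHblocks] at hsc
    have hHv : star v ⬝ᵥ (H *ᵥ v) =
        (star (x + ((H.toBlocks₁₁)⁻¹ * H.toBlocks₁₂) *ᵥ y)) ᵥ* H.toBlocks₁₁ ⬝ᵥ
          (x + ((H.toBlocks₁₁)⁻¹ * H.toBlocks₁₂) *ᵥ y) +
        star y ⬝ᵥ (schur H *ᵥ y) := by
      rw [dotProduct_mulVec, hvdef, hsc, hschurH, dotProduct_mulVec]
    have hnonneg : 0 ≤ (star (x + ((H.toBlocks₁₁)⁻¹ * H.toBlocks₁₂) *ᵥ y)) ᵥ* H.toBlocks₁₁ ⬝ᵥ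
        (x + ((H.toBlocks₁₁)⁻¹ * H.toBlocks₁₂) *ᵥ y) := by
      rw [← dotProduct_mulVec]
      exact hH11.posSemidef.dotProduct_mulVec_nonneg _
    rw [sub_mulVec, dotProduct_sub, hre, hHv]
    simpa using hnonneg
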